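/- Let n ≥ 2 and let T be a 0-1 word of length n−1. Then the function β defined on 0-1 words E of length n−1 by β_E = h_{E,T} satisfies the dual Bayer–Billera relations (this expresses that the quasisymmetric function D_T = Σ_{E ∈ G(T)} sgn(E,T) L_E lies in the peak algebra). -/

import Mathlib

/-- `S(T)`: the set of (1-indexed) positions of the 1's of the word `T`. -/
def onesSet (T : List Bool) : Finset ℕ :=
  ((Finset.range T.length).filter (fun i => T.getD i false = true)).image (· + 1)

/-- The increasing list `s_1 < ⋯ < s_t` of positions of the 1's of `T`. -/
def sListOf (T : List Bool) : List ℕ := (onesSet T).sort (· ≤ ·)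

/-- `sfun n T j = s_j`, with the conventions `s_0 = 0` and `s_j = n` for `j > t`. -/
def sfun (n : ℕ) (T : List Bool) (j : ℕ) : ℕ :=
  if j = 0 then 0 else (sListOf T).getD (j - 1) n

/-- `tOf T = t`, the number of 1's of `T`. -/
def tOf (T : List Bool) : ℕ := (onesSet T).card

/-- `S ∩ (s_j, s_{j+1})`, the elements of `S` lying strictly between `s_j` and `s_{j+1}`. -/
def intv (n : ℕ) (T : List Bool) (S : Finset ℕ) (j : ℕ) : Finset ℕ :=
  S.filter (fun x => sfun n T j < x ∧ x < sfun n T (j + 1))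

/-- `S ∈ G(T)`: every interval `(s_j, s_{j+1})` with `0 ≤ j ≤ t-1` meets `S`, and any two
elements of `S` in a common interval `(s_j, s_{j+1})`, `0 ≤ j ≤ t`, are congruent mod 2. -/
def memG (n : ℕ) (T : List Bool) (S : Finset ℕ) : Prop :=
  (∀ j < tOf T, (intv n T S j).Nonempty) ∧
    (∀ j ≤ tOf T, ∀ x ∈ intv n T S j, ∀ y ∈ intv n T S j, x % 2 = y % 2)

/-- `sgn(S,T) = (-1)^(Σ_{j=0}^{t-1} (s_{j+1} - y_j - 1))`, with `y_j` the least element of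
`S ∩ (s_j, s_{j+1})` (any choice gives the same value when `S ∈ G(T)`). -/
noncomputable def sgnST (n : ℕ) (T : List Bool) (S : Finset ℕ) : ℚ :=
  (-1 : ℚ) ^ (∑ j ∈ Finset.range (tOf T),
    (sfun n T (j + 1) - WithTop.untopD 0 (intv n T S j).min - 1))

/-- `h_{S,T}`. -/
noncomputable def hST (n : ℕ) (T : List Bool) (S : Finset ℕ) : ℚ :=
  haveI := Classical.propDecidable (memG n T S)
  if memG n T S then sgnST n T S else 0

/-- `∂(E) = {i ∈ [m-1] : E_i ≠ E_{i+1}} ∪ {m}` for a word `E` of length `m` (1-indexed). -/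
def bnd (E : List Bool) : Finset ℕ :=
  ((Finset.Icc 1 (E.length - 1)).filter
      (fun i => E.getD (i - 1) false ≠ E.getD i false)) ∪ {E.length}

/-- A word is sparse if it does not begin with a 1 and has no two consecutive 1's. -/
def Sparse (E : List Bool) : Prop :=
  E.head? ≠ some true ∧ E.Chain' (fun a b => ¬(a = true ∧ b = true))


/-- `chk E` is the word `E` with its last letter flipped (`chk [] = []`). -/
def chk : List Bool → List Bool
  | [] => []
  | [b] => [!b]
  | b :: c :: rest => b :: chk (c :: rest)

/-- `comp E` is the complementary word, with every letter flipped. -/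
def comp (E : List Bool) : List Bool := E.map (!·)

/-- `β` satisfies the dual Bayer–Billera relations (for words of length `m`). -/
def DualBB (m : ℕ) (β : List Bool → ℚ) : Prop :=
  ∀ E F : List Bool, E.length + F.length = m →
    β (E ++ F) + β (chk E ++ F) = β (E ++ comp F) + β (chk E ++ comp F)

lemma mem_onesSet_bounds {T : List Bool} {x : ℕ} (h : x ∈ onesSet T) :
    1 ≤ x ∧ x ≤ T.length := by
  simp only [onesSet, Finset.mem_image, Finset.mem_filter, Finset.mem_range] at h
  obtain ⟨i, ⟨hi, _⟩, rfl⟩ := h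
  omega

lemma length_sListOf (T : List Bool) : (sListOf T).length = tOf T :=
  Finset.length_sort _

lemma sfun_zero (n : ℕ) (T : List Bool) : sfun n T 0 = 0 := rfl

lemma sfun_of_gt (n : ℕ) (T : List Bool) {j : ℕ} (h : tOf T < j) : sfun n T j = n := by
  unfold sfun
  rw [if_neg (by omega)]
  apply List.getD_eq_default
  rw [length_sListOf]; omega

lemma sfun_mem {n : ℕ} {T : List Bool} {j : ℕ} (h1 : 1 ≤ j) (h2 : j ≤ tOf T) :
    sfun n T j ∈ onesSet T := by
  unfold sfun
  rw [if_neg (by omega)]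
  have hlt : j - 1 < (sListOf T).length := by rw [length_sListOf]; omega
  rw [List.getD_eq_getElem _ _ hlt]
  have := List.getElem_mem hlt
  rwa [← Finset.mem_sort (α := ℕ) (· ≤ ·)]

lemma sfun_lt_sfun_succ {n : ℕ} {T : List Bool} (hT : T.length < n) {j : ℕ} (hj : j ≤ tOf T) :
    sfun n T j < sfun n T (j + 1) := by
  rcases Nat.eq_zero_or_pos j with rfl | hj0
  · show sfun n T 0 < sfun n T 1
    rw [sfun_zero]
    rcases Nat.eq_zero_or_pos (tOf T) with h0 | h0
    · have h1 : sfun n T 1 = n := sfun_of_gt n T (by omega)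
      omega
    · have := mem_onesSet_bounds (sfun_mem (n := n) le_rfl h0)
      omega
  · rcases Nat.eq_or_lt_of_le hj with heq | hjt
    · have h1 : sfun n T (j + 1) = n := sfun_of_gt n T (by omega)
      have h2 := mem_onesSet_bounds (sfun_mem (n := n) hj0 hj)
      omega
    · have hs : (sListOf T).Pairwise (· < ·) := (Finset.sortedLT_sort (onesSet T)).pairwise
      have hl1 : j - 1 < (sListOf T).length := by rw [length_sListOf]; omega
      have hl2 : j < (sListOf T).length := by rw [length_sListOf]; omega
      unfold sfun
      rw [if_neg (by omega), if_neg (by omega)]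
      rw [List.getD_eq_getElem _ _ hl1,
        List.getD_eq_getElem _ _ (show j + 1 - 1 < (sListOf T).length by omega)]
      have := hs.rel_get_of_lt (a := ⟨j - 1, hl1⟩)
        (b := ⟨j + 1 - 1, by omega⟩) (by simp [Fin.lt_def]; omega)
      simpa using this

lemma sfun_mono {n : ℕ} {T : List Bool} (hT : T.length < n) : Monotone (sfun n T) := by
  apply monotone_nat_of_le_succ
  intro j
  rcases le_or_gt j (tOf T) with h | h
  · exact (sfun_lt_sfun_succ hT h).le
  · rw [sfun_of_gt n T h, sfun_of_gt n T (by omega)]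

lemma exists_interval {n : ℕ} {T : List Bool} (hT : T.length < n) {x : ℕ}
    (hx1 : 0 < x) (hx2 : x < n) (hx : x ∉ onesSet T) :
    ∃ j ≤ tOf T, sfun n T j < x ∧ x < sfun n T (j + 1) := by
  set t := tOf T with ht
  have h0 : sfun n T 0 < x := by rw [sfun_zero]; omega
  have hbdd : ∀ j, sfun n T j < x → j ≤ t := by
    intro j hj
    by_contra hc
    rw [sfun_of_gt n T (by omega)] at hj; omega
  classical
  set P := fun j => sfun n T j < x with hP
  have hP0 : P 0 := h0
  set j := Nat.findGreatest P (t + 1) with hjdef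
  have hPj : P j := Nat.findGreatest_spec (m := 0) (by omega) hP0
  have hjt : j ≤ t := hbdd j hPj
  refine ⟨j, hjt, hPj, ?_⟩
  have hnot : ¬ P (j + 1) := by
    intro hcon
    have := Nat.le_findGreatest (n := t + 1) (m := j + 1) (by omega) hcon
    omega
  have hge : x ≤ sfun n T (j + 1) := by simpa [P, not_lt] using hnot
  rcases Nat.eq_or_lt_of_le hge with heq | hlt
  · exfalso
    rcases le_or_gt (j + 1) t with hle | hgt
    · exact hx (heq ▸ sfun_mem (by omega) hle)
    · rw [sfun_of_gt n T (by omega)] at heq; omega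
  · exact hlt

lemma interval_unique {n : ℕ} {T : List Bool} (hT : T.length < n) {x j j' : ℕ}
    (h1 : sfun n T j < x) (h2 : x < sfun n T (j + 1))
    (h1' : sfun n T j' < x) (h2' : x < sfun n T (j' + 1)) : j = j' := by
  by_contra hne
  rcases Nat.lt_or_ge j j' with h | h
  · have := sfun_mono hT (by omega : j + 1 ≤ j'); omega
  · have := sfun_mono hT (by omega : j' + 1 ≤ j); omega

lemma sfun_lt_iff {n : ℕ} {T : List Bool} (hT : T.length < n) {i j : ℕ} :
    sfun n T i < sfun n T j → i < j := by
  intro h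
  by_contra hc
  exact absurd (sfun_mono hT (by omega : j ≤ i)) (by omega)

lemma not_mem_interval_of_ones {n : ℕ} {T : List Bool} (hT : T.length < n) {x j : ℕ}
    (hx : x ∈ onesSet T) :
    ¬ (sfun n T j < x ∧ x < sfun n T (j + 1)) := by
  rintro ⟨h1, h2⟩
  have hxl : x ∈ sListOf T := by rw [sListOf, Finset.mem_sort]; exact hx
  obtain ⟨i, hi, hget⟩ := List.getElem_of_mem hxl
  have hix : sfun n T (i + 1) = x := by
    unfold sfun
    rw [if_neg (by omega)]
    have : i + 1 - 1 = i := by omega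
    rw [this, List.getD_eq_getElem _ _ hi]
    exact hget
  have ha : j < i + 1 := sfun_lt_iff hT (by rw [hix]; exact h1)
  have hb : i + 1 < j + 1 := sfun_lt_iff hT (by rw [hix]; exact h2)
  omega

def pu (B : Finset ℕ) : Prop := ∀ x ∈ B, ∀ y ∈ B, x % 2 = y % 2

lemma pu_subset {A B : Finset ℕ} (h : A ⊆ B) (hB : pu B) : pu A :=
  fun x hx y hy => hB x (h hx) y (h hy)

lemma pu_insert_iff {x r : ℕ} {B : Finset ℕ} (hr : r ∈ B) (hx : x % 2 = r % 2) :
    pu (insert x B) ↔ pu B := by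
  constructor
  · exact pu_subset (Finset.subset_insert x B)
  · intro hB a ha b hb
    have key : ∀ z ∈ insert x B, z % 2 = r % 2 := by
      intro z hz
      rcases Finset.mem_insert.1 hz with rfl | hz
      · exact hx
      · exact hB z hz r hr
    rw [key a ha, key b hb]

lemma not_pu_pair {p q : ℕ} {B : Finset ℕ} (hp : p ∈ B) (hq : q ∈ B) (h : p % 2 ≠ q % 2) :
    ¬ pu B := fun hB => h (hB p hp q hq)

lemma pu_singleton (x : ℕ) : pu {x} := by
  intro a ha b hb
  simp only [Finset.mem_singleton] at ha hb; subst ha; subst hb; rfl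

lemma neg_one_pow_eq_of_mod {a b : ℕ} (h : a % 2 = b % 2) : (-1 : ℚ) ^ a = (-1) ^ b := by
  rcases Nat.even_or_odd a with ha | ha
  · have hb : Even b := by rw [Nat.even_iff] at *; omega
    rw [ha.neg_one_pow, hb.neg_one_pow]
  · have hb : Odd b := by rw [Nat.odd_iff] at *; omega
    rw [ha.neg_one_pow, hb.neg_one_pow]

lemma neg_one_pow_add_eq_zero {a b : ℕ} (h : a % 2 ≠ b % 2) : (-1 : ℚ) ^ a + (-1) ^ b = 0 := by
  rcases Nat.even_or_odd a with ha | ha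
  · have hb : Odd b := by rw [Nat.even_iff] at ha; rw [Nat.odd_iff]; omega
    rw [ha.neg_one_pow, hb.neg_one_pow]; ring
  · have hb : Even b := by rw [Nat.odd_iff] at ha; rw [Nat.even_iff]; omega
    rw [ha.neg_one_pow, hb.neg_one_pow]; ring

lemma intv_insert_self {n : ℕ} {T : List Bool} {S : Finset ℕ} {x j : ℕ}
    (h1 : sfun n T j < x) (h2 : x < sfun n T (j + 1)) :
    intv n T (insert x S) j = insert x (intv n T S j) := by
  unfold intv
  rw [Finset.filter_insert, if_pos ⟨h1, h2⟩]

lemma intv_insert_other {n : ℕ} {T : List Bool} {S : Finset ℕ} {x j : ℕ}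
    (hx : ¬ (sfun n T j < x ∧ x < sfun n T (j + 1))) :
    intv n T (insert x S) j = intv n T S j := by
  unfold intv
  rw [Finset.filter_insert, if_neg hx]

lemma hST_congr {n : ℕ} {T : List Bool} {S S' : Finset ℕ}
    (h : ∀ j, intv n T S j = intv n T S' j) : hST n T S = hST n T S' := by
  have hm : memG n T S = memG n T S' := by unfold memG; simp only [h]
  have hs : sgnST n T S = sgnST n T S' := by unfold sgnST; simp only [h]
  unfold hST
  rw [hm, hs]

lemma hST_insert_ones {n : ℕ} {T : List Bool} {S : Finset ℕ} {x : ℕ}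
    (hT : T.length < n) (hx : x ∈ onesSet T) :
    hST n T (insert x S) = hST n T S :=
  hST_congr fun j => intv_insert_other (not_mem_interval_of_ones hT hx)

lemma memG_split (n : ℕ) (T : List Bool) {j0 : ℕ} (hj0 : j0 ≤ tOf T) (S : Finset ℕ) :
    memG n T S ↔ ((∀ j < tOf T, j ≠ j0 → (intv n T S j).Nonempty) ∧
      (∀ j ≤ tOf T, j ≠ j0 → pu (intv n T S j))) ∧
      ((j0 < tOf T → (intv n T S j0).Nonempty) ∧ pu (intv n T S j0)) := by
  unfold memG pu
  constructor
  · rintro ⟨h1, h2⟩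
    exact ⟨⟨fun j hj _ => h1 j hj, fun j hj _ => h2 j hj⟩, ⟨fun h => h1 _ h, h2 _ hj0⟩⟩
  · rintro ⟨⟨h1, h2⟩, h3, h4⟩
    constructor
    · intro j hj
      by_cases hje : j = j0
      · subst hje; exact h3 hj
      · exact h1 j hj hje
    · intro j hj
      by_cases hje : j = j0
      · subst hje; exact h4
      · exact h2 j hj hje

lemma memG_iff_of (n : ℕ) (T : List Bool) {j0 : ℕ} (hj0 : j0 ≤ tOf T) {X S B : Finset ℕ}
    (hout : ∀ j, j ≠ j0 → intv n T X j = intv n T S j) (hin : intv n T X j0 = B) :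
    memG n T X ↔ ((∀ j < tOf T, j ≠ j0 → (intv n T S j).Nonempty) ∧
      (∀ j ≤ tOf T, j ≠ j0 → pu (intv n T S j))) ∧
      ((j0 < tOf T → B.Nonempty) ∧ pu B) := by
  rw [memG_split n T hj0 X]
  have e1 : (∀ j < tOf T, j ≠ j0 → (intv n T X j).Nonempty) ↔
      (∀ j < tOf T, j ≠ j0 → (intv n T S j).Nonempty) :=
    forall_congr' fun j => forall_congr' fun _ => forall_congr' fun hne => by rw [hout j hne]
  have e2 : (∀ j ≤ tOf T, j ≠ j0 → pu (intv n T X j)) ↔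
      (∀ j ≤ tOf T, j ≠ j0 → pu (intv n T S j)) :=
    forall_congr' fun j => forall_congr' fun _ => forall_congr' fun hne => by rw [hout j hne]
  rw [e1, e2, hin]

lemma sgn_eq_of (n : ℕ) (T : List Bool) {j0 : ℕ} (hj0 : j0 < tOf T) {X S B : Finset ℕ}
    (hout : ∀ j, j ≠ j0 → intv n T X j = intv n T S j) (hin : intv n T X j0 = B) :
    sgnST n T X = (-1 : ℚ) ^
      ((∑ j ∈ (Finset.range (tOf T)).erase j0,
          (sfun n T (j + 1) - WithTop.untopD 0 (intv n T S j).min - 1)) +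
        (sfun n T (j0 + 1) - WithTop.untopD 0 B.min - 1)) := by
  unfold sgnST
  congr 1
  rw [add_comm, ← Finset.add_sum_erase _
    (fun j => sfun n T (j + 1) - WithTop.untopD 0 (intv n T X j).min - 1) (Finset.mem_range.2 hj0)]
  congr 1
  · rw [hin]
  · apply Finset.sum_congr rfl
    intro j hj
    rw [hout j (Finset.ne_of_mem_erase hj)]

lemma sgn_eq_last (n : ℕ) (T : List Bool) {X S : Finset ℕ}
    (hout : ∀ j, j ≠ tOf T → intv n T X j = intv n T S j) :
    sgnST n T X = sgnST n T S := by
  unfold sgnST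
  congr 1
  apply Finset.sum_congr rfl
  intro j hj
  rw [hout j (by have := Finset.mem_range.1 hj; omega)]

lemma hST_eq_of_memG {n : ℕ} {T : List Bool} {S : Finset ℕ} (h : memG n T S) :
    hST n T S = sgnST n T S := by
  unfold hST; rw [if_pos h]

lemma hST_eq_zero {n : ℕ} {T : List Bool} {S : Finset ℕ} (h : ¬ memG n T S) :
    hST n T S = 0 := by
  unfold hST; rw [if_neg h]

lemma pu_insert_empty (x : ℕ) : pu (insert x ∅) := by
  intro a ha b hb
  simp only [Finset.mem_insert, Finset.notMem_empty, or_false] at ha hb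
  omega

lemma key (n : ℕ) (hn : 2 ≤ n) (T : List Bool) (hT : T.length = n - 1)
    (S : Finset ℕ) (p : ℕ) (hp1 : 1 ≤ p) (hp2 : p + 3 ≤ n)
    (hS : n - 1 ∈ S) (hpS : p ∉ S) (hqS : p + 1 ∉ S) :
    hST n T (insert p (insert (p + 1) S)) + hST n T S =
      hST n T (insert p S) + hST n T (insert (p + 1) S) := by
  have hTn : T.length < n := by omega
  by_cases hpo : p ∈ onesSet T
  · rw [hST_insert_ones hTn hpo, hST_insert_ones hTn hpo]
    ring
  by_cases hqo : p + 1 ∈ onesSet T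
  · rw [Finset.insert_comm, hST_insert_ones hTn hqo, hST_insert_ones hTn hqo]
  obtain ⟨j0, hj0t, hpl, hpr⟩ := exists_interval hTn (by omega) (by omega) hpo
  have hql : sfun n T j0 < p + 1 := by omega
  have hqr : p + 1 < sfun n T (j0 + 1) := by
    rcases Nat.eq_or_lt_of_le (show p + 1 ≤ sfun n T (j0 + 1) by omega) with heq | hlt
    · exfalso
      rcases Nat.eq_or_lt_of_le hj0t with hj | hj
      · rw [sfun_of_gt n T (by omega)] at heq
        omega
      · exact hqo (heq ▸ sfun_mem (by omega) (by omega))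
    · exact hlt
  have hOp : ∀ (S' : Finset ℕ) j, j ≠ j0 → intv n T (insert p S') j = intv n T S' j :=
    fun S' j hj => intv_insert_other fun hc => hj (interval_unique hTn hc.1 hc.2 hpl hpr)
  have hOq : ∀ (S' : Finset ℕ) j, j ≠ j0 → intv n T (insert (p + 1) S') j = intv n T S' j :=
    fun S' j hj => intv_insert_other fun hc => hj (interval_unique hTn hc.1 hc.2 hql hqr)
  have hIp : ∀ (S' : Finset ℕ), intv n T (insert p S') j0 = insert p (intv n T S' j0) :=
    fun S' => intv_insert_self hpl hpr
  have hIq : ∀ (S' : Finset ℕ),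
      intv n T (insert (p + 1) S') j0 = insert (p + 1) (intv n T S' j0) :=
    fun S' => intv_insert_self hql hqr
  set A := intv n T S j0 with hA
  have out1 : ∀ j, j ≠ j0 → intv n T (insert p (insert (p + 1) S)) j = intv n T S j :=
    fun j hj => by rw [hOp _ j hj, hOq _ j hj]
  have out2 : ∀ j, j ≠ j0 → intv n T (insert p S) j = intv n T S j := fun j hj => hOp _ j hj
  have out3 : ∀ j, j ≠ j0 → intv n T (insert (p + 1) S) j = intv n T S j :=
    fun j hj => hOq _ j hj
  have out0 : ∀ j, j ≠ j0 → intv n T S j = intv n T S j := fun j _ => rfl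
  have in1 : intv n T (insert p (insert (p + 1) S)) j0 = insert p (insert (p + 1) A) := by
    rw [hIp, hIq]
  have in2 : intv n T (insert p S) j0 = insert p A := hIp S
  have in3 : intv n T (insert (p + 1) S) j0 = insert (p + 1) A := hIq S
  have in0 : intv n T S j0 = A := rfl
  have m1 := memG_iff_of n T hj0t out1 in1
  have m2 := memG_iff_of n T hj0t out2 in2
  have m3 := memG_iff_of n T hj0t out3 in3
  have m0 := memG_iff_of n T hj0t out0 in0
  have hppq : p % 2 ≠ (p + 1) % 2 := by omega
  by_cases hRest : (∀ j < tOf T, j ≠ j0 → (intv n T S j).Nonempty) ∧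
      (∀ j ≤ tOf T, j ≠ j0 → pu (intv n T S j))
  · rcases Nat.eq_or_lt_of_le hj0t with hlast | hj0lt
    · -- j0 = tOf T : signs all agree, only parity matters, n-1 ∈ A
      subst hlast
      have hsfn : sfun n T (tOf T + 1) = n := sfun_of_gt n T (by omega)
      have hrA : n - 1 ∈ A := by
        rw [hA]
        simp only [intv, Finset.mem_filter]
        exact ⟨hS, by omega, by omega⟩
      have s1 := sgn_eq_last n T out1
      have s2 := sgn_eq_last n T out2
      have s3 := sgn_eq_last n T out3
      have hnot1 : ¬ memG n T (insert p (insert (p + 1) S)) := by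
        rw [m1]
        rintro ⟨-, -, hpu⟩
        exact not_pu_pair (Finset.mem_insert_self _ _)
          (Finset.mem_insert_of_mem (Finset.mem_insert_self _ _)) hppq hpu
      have hvac : ∀ B : Finset ℕ, ((tOf T < tOf T → B.Nonempty) ↔ True) := by
        intro B
        simp only [iff_true]
        intro h
        exact absurd h (by omega)
      by_cases hparp : p % 2 = (n - 1) % 2
      · have hnot3 : ¬ memG n T (insert (p + 1) S) := by
          rw [m3]
          rintro ⟨-, -, hpu⟩
          exact not_pu_pair (Finset.mem_insert_self _ _)
            (Finset.mem_insert_of_mem hrA) (by omega) hpu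
        have hmem2 : memG n T (insert p S) ↔ memG n T S := by
          rw [m2, m0, pu_insert_iff hrA hparp, hvac (insert p A), hvac A]
        rw [hST_eq_zero hnot1, hST_eq_zero hnot3]
        by_cases hmS : memG n T S
        · rw [hST_eq_of_memG hmS, hST_eq_of_memG (hmem2.2 hmS), s2]
          ring
        · rw [hST_eq_zero hmS, hST_eq_zero (fun h => hmS (hmem2.1 h))]
      · have hparq : (p + 1) % 2 = (n - 1) % 2 := by omega
        have hnot2 : ¬ memG n T (insert p S) := by
          rw [m2]
          rintro ⟨-, -, hpu⟩
          exact not_pu_pair (Finset.mem_insert_self _ _)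
            (Finset.mem_insert_of_mem hrA) (by omega) hpu
        have hmem3 : memG n T (insert (p + 1) S) ↔ memG n T S := by
          rw [m3, m0, pu_insert_iff hrA hparq, hvac (insert (p + 1) A), hvac A]
        rw [hST_eq_zero hnot1, hST_eq_zero hnot2]
        by_cases hmS : memG n T S
        · rw [hST_eq_of_memG hmS, hST_eq_of_memG (hmem3.2 hmS), s3]
        · rw [hST_eq_zero hmS, hST_eq_zero (fun h => hmS (hmem3.1 h))]
    · -- j0 < tOf T
      have s1 := sgn_eq_of n T hj0lt out1 in1
      have s2 := sgn_eq_of n T hj0lt out2 in2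
      have s3 := sgn_eq_of n T hj0lt out3 in3
      have s0 := sgn_eq_of n T hj0lt out0 in0
      have hnot1 : ¬ memG n T (insert p (insert (p + 1) S)) := by
        rw [m1]
        rintro ⟨-, -, hpu⟩
        exact not_pu_pair (Finset.mem_insert_self _ _)
          (Finset.mem_insert_of_mem (Finset.mem_insert_self _ _)) hppq hpu
      rw [hST_eq_zero hnot1]
      by_cases hAne : A.Nonempty
      · by_cases hpuA : pu A
        · set r := A.min' hAne with hr
          have hrmem : A.min' hAne ∈ A := A.min'_mem hAne
          have hrint : sfun n T j0 < r ∧ r < sfun n T (j0 + 1) := by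
            have hin' : r ∈ A := hrmem
            rw [hA] at hin'
            simp only [intv, Finset.mem_filter] at hin'
            exact hin'.2
          have huntop : (WithTop.untopD 0 A.min) = r := by
            rw [← Finset.coe_min' hAne]; rfl
          have hminins : ∀ x : ℕ, (WithTop.untopD 0 (insert x A).min) = min r x := by
            intro x
            have h1 : (insert x A).Nonempty := Finset.insert_nonempty _ _
            rw [← Finset.coe_min' h1]
            have h2 : (insert x A).min' h1 = min r x := by
              rw [hr]
              exact (Finset.min'_insert x A hAne).trans (min_comm _ _)
            rw [h2]; rfl
          by_cases hparp : p % 2 = r % 2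
          · have hnot3 : ¬ memG n T (insert (p + 1) S) := by
              rw [m3]
              rintro ⟨-, -, hpu⟩
              exact not_pu_pair (Finset.mem_insert_self _ _)
                (Finset.mem_insert_of_mem hrmem) (by omega) hpu
            rw [hST_eq_zero hnot3]
            have hmem2 : memG n T (insert p S) := by
              rw [m2]
              exact ⟨hRest, fun _ => Finset.insert_nonempty _ _,
                (pu_insert_iff hrmem hparp).2 hpuA⟩
            have hmem0 : memG n T S := by
              rw [m0]
              exact ⟨hRest, fun _ => hAne, hpuA⟩
            rw [hST_eq_of_memG hmem2, hST_eq_of_memG hmem0, s2, s0, hminins, huntop,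
              zero_add, add_zero]
            exact (neg_one_pow_eq_of_mod (by omega)).symm
          · have hparq : (p + 1) % 2 = r % 2 := by omega
            have hnot2 : ¬ memG n T (insert p S) := by
              rw [m2]
              rintro ⟨-, -, hpu⟩
              exact not_pu_pair (Finset.mem_insert_self _ _)
                (Finset.mem_insert_of_mem hrmem) (by omega) hpu
            rw [hST_eq_zero hnot2]
            have hmem3 : memG n T (insert (p + 1) S) := by
              rw [m3]
              exact ⟨hRest, fun _ => Finset.insert_nonempty _ _,
                (pu_insert_iff hrmem hparq).2 hpuA⟩
            have hmem0 : memG n T S := by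
              rw [m0]
              exact ⟨hRest, fun _ => hAne, hpuA⟩
            rw [hST_eq_of_memG hmem3, hST_eq_of_memG hmem0, s3, s0, hminins, huntop,
              zero_add, zero_add]
            exact (neg_one_pow_eq_of_mod (by omega)).symm
        · have z0 : ¬ memG n T S := by rw [m0]; rintro ⟨-, -, h⟩; exact hpuA h
          have z2 : ¬ memG n T (insert p S) := by
            rw [m2]; rintro ⟨-, -, h⟩
            exact hpuA (pu_subset (Finset.subset_insert _ _) h)
          have z3 : ¬ memG n T (insert (p + 1) S) := by
            rw [m3]; rintro ⟨-, -, h⟩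
            exact hpuA (pu_subset (Finset.subset_insert _ _) h)
          rw [hST_eq_zero z0, hST_eq_zero z2, hST_eq_zero z3]
      · have hAe : A = ∅ := Finset.not_nonempty_iff_eq_empty.1 hAne
        have z0 : ¬ memG n T S := by
          rw [m0]; rintro ⟨-, hne, -⟩; exact hAne (hne hj0lt)
        have hmem2 : memG n T (insert p S) := by
          rw [m2, hAe]
          exact ⟨hRest, fun _ => Finset.insert_nonempty _ _, pu_insert_empty p⟩
        have hmem3 : memG n T (insert (p + 1) S) := by
          rw [m3, hAe]
          exact ⟨hRest, fun _ => Finset.insert_nonempty _ _, pu_insert_empty (p + 1)⟩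
        have hm2 : (WithTop.untopD 0 (insert p (∅ : Finset ℕ)).min) = p := by
          have h1 : (insert p (∅ : Finset ℕ)).Nonempty := Finset.insert_nonempty _ _
          rw [← Finset.coe_min' h1]
          congr 1
        have hm3 : (WithTop.untopD 0 (insert (p + 1) (∅ : Finset ℕ)).min) = p + 1 := by
          have h1 : (insert (p + 1) (∅ : Finset ℕ)).Nonempty := Finset.insert_nonempty _ _
          rw [← Finset.coe_min' h1]
          congr 1
        rw [hST_eq_zero z0, hST_eq_of_memG hmem2, hST_eq_of_memG hmem3, s2, s3, hAe,
          hm2, hm3]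
        rw [show (0 : ℚ) + 0 = 0 by ring]
        symm
        exact neg_one_pow_add_eq_zero (by omega)
  · have z1 : ¬ memG n T (insert p (insert (p + 1) S)) := by
      rw [m1]; rintro ⟨h, -⟩; exact hRest h
    have z2 : ¬ memG n T (insert p S) := by rw [m2]; rintro ⟨h, -⟩; exact hRest h
    have z3 : ¬ memG n T (insert (p + 1) S) := by rw [m3]; rintro ⟨h, -⟩; exact hRest h
    have z0 : ¬ memG n T S := by rw [m0]; rintro ⟨h, -⟩; exact hRest h
    rw [hST_eq_zero z0, hST_eq_zero z1, hST_eq_zero z2, hST_eq_zero z3]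

lemma mem_bnd {G : List Bool} {x : ℕ} :
    x ∈ bnd G ↔ x = G.length ∨
      (1 ≤ x ∧ x ≤ G.length - 1 ∧ G.getD (x - 1) false ≠ G.getD x false) := by
  simp only [bnd, Finset.mem_union, Finset.mem_filter, Finset.mem_Icc, Finset.mem_singleton]
  tauto

lemma chk_length : ∀ E : List Bool, (chk E).length = E.length
  | [] => rfl
  | [_] => rfl
  | _ :: c :: r => by
    show (chk (c :: r)).length + 1 = _
    rw [chk_length (c :: r)]
    rfl

lemma comp_length (E : List Bool) : (comp E).length = E.length := List.length_map _

lemma chk_eq_set : ∀ E : List Bool, E ≠ [] →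
    chk E = E.set (E.length - 1) (!(E.getD (E.length - 1) false))
  | [b], _ => rfl
  | b :: c :: r, _ => by
    show b :: chk (c :: r) = _
    rw [chk_eq_set (c :: r) (by simp)]
    have h1 : (b :: c :: r).length - 1 = ((c :: r).length - 1) + 1 := by
      simp
    rw [h1]
    rfl

lemma getD_set_ne (l : List Bool) (j i : ℕ) (x : Bool) (h : i ≠ j) :
    (l.set j x).getD i false = l.getD i false := by
  unfold List.getD
  rw [List.getElem?_set_ne h.symm]

lemma getD_set_eq (l : List Bool) (j : ℕ) (x : Bool) (h : j < l.length) :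
    (l.set j x).getD j false = x := by
  unfold List.getD
  rw [List.getElem?_set_self (by simpa using h)]
  rfl

lemma getD_chk_ne (E : List Bool) (i : ℕ) (h : i ≠ E.length - 1) :
    (chk E).getD i false = E.getD i false := by
  rcases eq_or_ne E [] with rfl | hE
  · rfl
  · rw [chk_eq_set E hE, getD_set_ne _ _ _ _ h]

lemma getD_chk_last (E : List Bool) (hE : E ≠ []) :
    (chk E).getD (E.length - 1) false = !(E.getD (E.length - 1) false) := by
  rw [chk_eq_set E hE, getD_set_eq]
  have : 0 < E.length := List.length_pos_iff.2 hE
  omega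

lemma getD_comp (F : List Bool) (i : ℕ) (h : i < F.length) :
    (comp F).getD i false = !(F.getD i false) := by
  unfold comp List.getD
  rw [List.getElem?_map]
  rw [List.getElem?_eq_getElem h]
  rfl

lemma bnd_comp (F : List Bool) : bnd (comp F) = bnd F := by
  ext x
  rw [mem_bnd, mem_bnd, comp_length]
  constructor <;> rintro (h | ⟨h1, h2, h3⟩)
  · exact Or.inl h
  · refine Or.inr ⟨h1, h2, ?_⟩
    rw [getD_comp F (x - 1) (by omega), getD_comp F x (by omega)] at h3
    intro hc; exact h3 (by rw [hc])
  · exact Or.inl h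
  · refine Or.inr ⟨h1, h2, ?_⟩
    rw [getD_comp F (x - 1) (by omega), getD_comp F x (by omega)]
    intro hc; exact h3 (by
      have : F.getD (x-1) false = !!(F.getD (x-1) false) := by simp
      have h4 : F.getD x false = !!(F.getD x false) := by simp
      rw [this, h4, hc])

lemma comp_append (E F : List Bool) : comp (E ++ F) = comp E ++ comp F :=
  List.map_append

lemma bool_ne_iff_ne (u v : Bool) : ((!u) ≠ (!v)) ↔ (u ≠ v) := by cases u <;> cases v <;> simp
lemma bool_ne_not_right (u v : Bool) : (u ≠ (!v)) ↔ ¬(u ≠ v) := by cases u <;> cases v <;> simp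
lemma bool_not_ne_left (u v : Bool) : ((!u) ≠ v) ↔ ¬(u ≠ v) := by cases u <;> cases v <;> simp

lemma mem_bnd_congr {G H : List Bool} (hlen : G.length = H.length) {x : ℕ}
    (hc : 1 ≤ x → x ≤ H.length - 1 →
      ((G.getD (x - 1) false ≠ G.getD x false) ↔ (H.getD (x - 1) false ≠ H.getD x false))) :
    (x ∈ bnd G ↔ x ∈ bnd H) := by
  rw [mem_bnd, mem_bnd, hlen]
  constructor <;> rintro (h | ⟨h1, h2, h3⟩)
  · exact Or.inl h
  · exact Or.inr ⟨h1, h2, (hc h1 h2).1 h3⟩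
  · exact Or.inl h
  · exact Or.inr ⟨h1, h2, (hc h1 h2).2 h3⟩

lemma mem_bnd_of_cond {G : List Bool} {x : ℕ} (h1 : 1 ≤ x) (h2 : x ≤ G.length - 1) :
    (x ∈ bnd G ↔ G.getD (x - 1) false ≠ G.getD x false) := by
  rw [mem_bnd]
  constructor
  · rintro (h | ⟨-, -, h⟩)
    · omega
    · exact h
  · intro h
    exact Or.inr ⟨h1, h2, h⟩

lemma getD_chkF (E F : List Bool) (hE : E ≠ []) (idx : ℕ) (h : idx ≠ E.length - 1) :
    (chk E ++ F).getD idx false = (E ++ F).getD idx false := by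
  rcases lt_or_ge idx E.length with hlt | hge
  · rw [List.getD_append _ _ _ _ (by rw [chk_length]; exact hlt),
      List.getD_append _ _ _ _ hlt, getD_chk_ne E idx h]
  · rw [List.getD_append_right _ _ _ _ (by rw [chk_length]; exact hge),
      List.getD_append_right _ _ _ _ hge, chk_length]

section main
variable (E F : List Bool)

lemma agree_chkF (hE : 2 ≤ E.length) (x : ℕ) (h1 : x ≠ E.length - 1) (h2 : x ≠ E.length) :
    (x ∈ bnd (chk E ++ F) ↔ x ∈ bnd (E ++ F)) := by
  have hEne : E ≠ [] := by intro h; rw [h] at hE; simp at hE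
  apply mem_bnd_congr (by simp [chk_length])
  intro hb1 hb2
  rw [getD_chkF E F hEne (x - 1) (by omega), getD_chkF E F hEne x h1]

lemma cond_compF (hF : F ≠ []) (x : ℕ) (h3 : x ≠ E.length)
    (hb1 : 1 ≤ x) (hb2 : x ≤ (E ++ F).length - 1) :
    ((E ++ comp F).getD (x - 1) false ≠ (E ++ comp F).getD x false) ↔
      ((E ++ F).getD (x - 1) false ≠ (E ++ F).getD x false) := by
  have hFl : 0 < F.length := List.length_pos_iff.2 hF
  rw [List.length_append] at hb2
  rcases lt_or_ge x E.length with hlt | hge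
  · rw [List.getD_append _ _ _ _ hlt, List.getD_append _ _ _ _ hlt,
      List.getD_append _ _ _ _ (by omega), List.getD_append _ _ _ _ (by omega)]
  · have hgt : E.length < x := by omega
    rw [List.getD_append_right _ _ _ _ (by omega : E.length ≤ x - 1),
      List.getD_append_right _ _ _ _ hge,
      List.getD_append_right _ _ _ _ (by omega : E.length ≤ x - 1),
      List.getD_append_right _ _ _ _ hge,
      getD_comp F _ (by omega), getD_comp F _ (by omega),
      bool_ne_iff_ne]

lemma agree_compF (hE : 2 ≤ E.length) (hF : F ≠ []) (x : ℕ) (h2 : x ≠ E.length) :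
    (x ∈ bnd (E ++ comp F) ↔ x ∈ bnd (E ++ F)) := by
  apply mem_bnd_congr (by simp [comp_length])
  intro hb1 hb2
  exact cond_compF E F hF x h2 hb1 hb2

lemma agree_chk_compF (hE : 2 ≤ E.length) (hF : F ≠ []) (x : ℕ)
    (h1 : x ≠ E.length - 1) (h2 : x ≠ E.length) :
    (x ∈ bnd (chk E ++ comp F) ↔ x ∈ bnd (E ++ F)) := by
  have hEne : E ≠ [] := by intro h; rw [h] at hE; simp at hE
  apply mem_bnd_congr (by simp [chk_length, comp_length])
  intro hb1 hb2
  rw [getD_chkF E (comp F) hEne (x - 1) (by omega), getD_chkF E (comp F) hEne x h1]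
  exact cond_compF E F hF x h2 hb1 hb2

-- membership at the two special positions
lemma memb_p_EF (hE : 2 ≤ E.length) :
    ((E.length - 1) ∈ bnd (E ++ F) ↔
      E.getD (E.length - 2) false ≠ E.getD (E.length - 1) false) := by
  rw [mem_bnd_of_cond (by omega) (by simp [List.length_append]; omega)]
  rw [List.getD_append _ _ _ _ (by omega), List.getD_append _ _ _ _ (by omega)]
  have : E.length - 1 - 1 = E.length - 2 := by omega
  rw [this]

lemma memb_q_EF (hE : 2 ≤ E.length) (hF : F ≠ []) :
    ((E.length) ∈ bnd (E ++ F) ↔ E.getD (E.length - 1) false ≠ F.getD 0 false) := by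
  have hFl : 0 < F.length := List.length_pos_iff.2 hF
  rw [mem_bnd_of_cond (by omega) (by simp [List.length_append]; omega)]
  rw [List.getD_append _ _ _ _ (by omega), List.getD_append_right _ _ _ _ (by omega)]
  simp

lemma memb_p_chkF (hE : 2 ≤ E.length) :
    ((E.length - 1) ∈ bnd (chk E ++ F) ↔
      ¬ (E.getD (E.length - 2) false ≠ E.getD (E.length - 1) false)) := by
  have hEne : E ≠ [] := by intro h; rw [h] at hE; simp at hE
  rw [mem_bnd_of_cond (by omega) (by simp [List.length_append, chk_length]; omega)]
  rw [List.getD_append _ _ _ _ (by rw [chk_length]; omega),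
    List.getD_append _ _ _ _ (by rw [chk_length]; omega),
    getD_chk_ne E _ (by omega), getD_chk_last E hEne]
  have : E.length - 1 - 1 = E.length - 2 := by omega
  rw [this, bool_ne_not_right]

lemma memb_q_chkF (hE : 2 ≤ E.length) (hF : F ≠ []) :
    ((E.length) ∈ bnd (chk E ++ F) ↔
      ¬ (E.getD (E.length - 1) false ≠ F.getD 0 false)) := by
  have hEne : E ≠ [] := by intro h; rw [h] at hE; simp at hE
  have hFl : 0 < F.length := List.length_pos_iff.2 hF
  rw [mem_bnd_of_cond (by omega) (by simp [List.length_append, chk_length]; omega)]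
  rw [List.getD_append _ _ _ _ (by rw [chk_length]; omega),
    List.getD_append_right _ _ _ _ (by rw [chk_length]),
    getD_chk_last E hEne, chk_length]
  simp only [Nat.sub_self]
  rw [bool_not_ne_left]

lemma memb_p_compF (hE : 2 ≤ E.length) :
    ((E.length - 1) ∈ bnd (E ++ comp F) ↔
      E.getD (E.length - 2) false ≠ E.getD (E.length - 1) false) := by
  rw [mem_bnd_of_cond (by omega) (by simp [List.length_append, comp_length]; omega)]
  rw [List.getD_append _ _ _ _ (by omega), List.getD_append _ _ _ _ (by omega)]
  have : E.length - 1 - 1 = E.length - 2 := by omega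
  rw [this]

lemma memb_q_compF (hE : 2 ≤ E.length) (hF : F ≠ []) :
    ((E.length) ∈ bnd (E ++ comp F) ↔
      ¬ (E.getD (E.length - 1) false ≠ F.getD 0 false)) := by
  have hFl : 0 < F.length := List.length_pos_iff.2 hF
  rw [mem_bnd_of_cond (by omega) (by simp [List.length_append, comp_length]; omega)]
  rw [List.getD_append _ _ _ _ (by omega), List.getD_append_right _ _ _ _ (by omega)]
  simp only [Nat.sub_self]
  rw [getD_comp F 0 (by omega), bool_ne_not_right]

lemma memb_p_chk_compF (hE : 2 ≤ E.length) :
    ((E.length - 1) ∈ bnd (chk E ++ comp F) ↔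
      ¬ (E.getD (E.length - 2) false ≠ E.getD (E.length - 1) false)) := by
  have hEne : E ≠ [] := by intro h; rw [h] at hE; simp at hE
  rw [mem_bnd_of_cond (by omega)
    (by simp [List.length_append, chk_length, comp_length]; omega)]
  rw [List.getD_append _ _ _ _ (by rw [chk_length]; omega),
    List.getD_append _ _ _ _ (by rw [chk_length]; omega),
    getD_chk_ne E _ (by omega), getD_chk_last E hEne]
  have : E.length - 1 - 1 = E.length - 2 := by omega
  rw [this, bool_ne_not_right]

lemma memb_q_chk_compF (hE : 2 ≤ E.length) (hF : F ≠ []) :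
    ((E.length) ∈ bnd (chk E ++ comp F) ↔
      E.getD (E.length - 1) false ≠ F.getD 0 false) := by
  have hEne : E ≠ [] := by intro h; rw [h] at hE; simp at hE
  have hFl : 0 < F.length := List.length_pos_iff.2 hF
  rw [mem_bnd_of_cond (by omega)
    (by simp [List.length_append, chk_length, comp_length]; omega)]
  rw [List.getD_append _ _ _ _ (by rw [chk_length]; omega),
    List.getD_append_right _ _ _ _ (by rw [chk_length]),
    getD_chk_last E hEne, chk_length]
  simp only [Nat.sub_self]
  rw [getD_comp F 0 (by omega), bool_not_ne_left, bool_ne_not_right]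
  tauto

end main


lemma char_gen {Y Y0 : Finset ℕ} {p q : ℕ} (hpq : p ≠ q) {ca cb : Prop}
    (hp : p ∈ Y ↔ ca) (hq : q ∈ Y ↔ cb)
    (hagree : ∀ x, x ≠ p → x ≠ q → (x ∈ Y ↔ x ∈ Y0)) (x : ℕ) :
    x ∈ Y ↔ (x ∈ (Y0.erase p).erase q ∨ (ca ∧ x = p) ∨ (cb ∧ x = q)) := by
  by_cases hxp : x = p
  · subst hxp
    rw [hp]
    simp [Finset.mem_erase, hpq]
  · by_cases hxq : x = q
    · subst hxq
      rw [hq]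
      simp [Finset.mem_erase, hxp]
    · rw [hagree x hxp hxq]
      simp [Finset.mem_erase, hxp, hxq]

set_option maxHeartbeats 2000000 in
theorem hST_dualBB (n : ℕ) (hn : 2 ≤ n) (T : List Bool) (hT : T.length = n - 1) :
    DualBB (n - 1) (fun E => hST n T (bnd E)) := by
  intro E F hlen
  show hST n T (bnd (E ++ F)) + hST n T (bnd (chk E ++ F)) =
    hST n T (bnd (E ++ comp F)) + hST n T (bnd (chk E ++ comp F))
  rcases eq_or_ne F [] with rfl | hF
  · rfl
  rcases eq_or_ne E [] with rfl | hE0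
  · show hST n T (bnd F) + hST n T (bnd F) =
      hST n T (bnd (comp F)) + hST n T (bnd (comp F))
    rw [bnd_comp]
  rcases Nat.lt_or_ge E.length 2 with hE1 | hE2
  · -- E = [e]
    have hk1 : E.length = 1 := by
      have := List.length_pos_iff.2 hE0; omega
    obtain ⟨e, rfl⟩ : ∃ e, E = [e] := by
      rcases E with _ | ⟨e, rest⟩
      · simp at hE0
      · have : rest = [] := by simpa using hk1
        exact ⟨e, by rw [this]⟩
    have e1 : bnd (chk [e] ++ comp F) = bnd ([e] ++ F) := by
      have h : chk [e] ++ comp F = comp ([e] ++ F) := by simp [comp, chk]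
      rw [h, bnd_comp]
    have e2 : bnd ([e] ++ comp F) = bnd (chk [e] ++ F) := by
      have h : [e] ++ comp F = comp (chk [e] ++ F) := by simp [comp, chk]
      rw [h, bnd_comp]
    rw [e1, e2]
    ring
  · -- main case: 2 ≤ E.length, F ≠ []
    have hF1 : 1 ≤ F.length := List.length_pos_iff.2 hF
    have hpq : E.length - 1 ≠ E.length := by omega
    have c1 := char_gen (Y := bnd (E ++ F)) (Y0 := bnd (E ++ F)) hpq
      (memb_p_EF E F hE2) (memb_q_EF E F hE2 hF) (fun x _ _ => Iff.rfl)
    have c2 := char_gen (Y := bnd (chk E ++ F)) (Y0 := bnd (E ++ F)) hpq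
      (memb_p_chkF E F hE2) (memb_q_chkF E F hE2 hF)
      (fun x h1 h2 => agree_chkF E F hE2 x h1 h2)
    have c3 := char_gen (Y := bnd (E ++ comp F)) (Y0 := bnd (E ++ F)) hpq
      (memb_p_compF E F hE2) (memb_q_compF E F hE2 hF)
      (fun x _ h2 => agree_compF E F hE2 hF x h2)
    have c4 := char_gen (Y := bnd (chk E ++ comp F)) (Y0 := bnd (E ++ F)) hpq
      (memb_p_chk_compF E F hE2) (memb_q_chk_compF E F hE2 hF)
      (fun x h1 h2 => agree_chk_compF E F hE2 hF x h1 h2)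
    set S' := ((bnd (E ++ F)).erase (E.length - 1)).erase E.length with hS'def
    have hpS' : E.length - 1 ∉ S' := by
      rw [hS'def]
      simp [Finset.mem_erase]
    have hqS' : E.length ∉ S' := by
      rw [hS'def]
      simp [Finset.mem_erase]
    have hmS' : n - 1 ∈ S' := by
      rw [hS'def]
      simp only [Finset.mem_erase]
      have hlen2 : (E ++ F).length = n - 1 := by
        rw [List.length_append]; exact hlen
      refine ⟨by omega, by omega, ?_⟩
      rw [mem_bnd]
      left
      omega
    have hk1 : E.length - 1 + 1 = E.length := by omega
    have hkey := key n hn T hT S' (E.length - 1) (by omega) (by omega) hmS' hpS'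
      (by rw [hk1]; exact hqS')
    rw [hk1] at hkey
    clear hS'def
    clear_value S'
    by_cases ha : E.getD (E.length - 2) false ≠ E.getD (E.length - 1) false <;>
      by_cases hb : E.getD (E.length - 1) false ≠ F.getD 0 false
    · have eq1 : bnd (E ++ F) = insert (E.length - 1) (insert E.length S') := by
        apply Finset.ext; intro x
        rw [c1 x]
        try simp only [Finset.mem_insert]
        tauto
      have eq2 : bnd (chk E ++ F) = S' := by
        apply Finset.ext; intro x
        rw [c2 x]
        try simp only [Finset.mem_insert]
        tauto
      have eq3 : bnd (E ++ comp F) = insert (E.length - 1) S' := by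
        apply Finset.ext; intro x
        rw [c3 x]
        try simp only [Finset.mem_insert]
        tauto
      have eq4 : bnd (chk E ++ comp F) = insert E.length S' := by
        apply Finset.ext; intro x
        rw [c4 x]
        try simp only [Finset.mem_insert]
        tauto
      rw [eq1, eq2, eq3, eq4]
      linarith [hkey]
    · have eq1 : bnd (E ++ F) = insert (E.length - 1) S' := by
        apply Finset.ext; intro x
        rw [c1 x]
        try simp only [Finset.mem_insert]
        tauto
      have eq2 : bnd (chk E ++ F) = insert E.length S' := by
        apply Finset.ext; intro x
        rw [c2 x]
        try simp only [Finset.mem_insert]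
        tauto
      have eq3 : bnd (E ++ comp F) = insert (E.length - 1) (insert E.length S') := by
        apply Finset.ext; intro x
        rw [c3 x]
        try simp only [Finset.mem_insert]
        tauto
      have eq4 : bnd (chk E ++ comp F) = S' := by
        apply Finset.ext; intro x
        rw [c4 x]
        try simp only [Finset.mem_insert]
        tauto
      rw [eq1, eq2, eq3, eq4]
      linarith [hkey]
    · have eq1 : bnd (E ++ F) = insert E.length S' := by
        apply Finset.ext; intro x
        rw [c1 x]
        try simp only [Finset.mem_insert]
        tauto
      have eq2 : bnd (chk E ++ F) = insert (E.length - 1) S' := by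
        apply Finset.ext; intro x
        rw [c2 x]
        try simp only [Finset.mem_insert]
        tauto
      have eq3 : bnd (E ++ comp F) = S' := by
        apply Finset.ext; intro x
        rw [c3 x]
        try simp only [Finset.mem_insert]
        tauto
      have eq4 : bnd (chk E ++ comp F) = insert (E.length - 1) (insert E.length S') := by
        apply Finset.ext; intro x
        rw [c4 x]
        try simp only [Finset.mem_insert]
        tauto
      rw [eq1, eq2, eq3, eq4]
      linarith [hkey]
    · have eq1 : bnd (E ++ F) = S' := by
        apply Finset.ext; intro x
        rw [c1 x]
        try simp only [Finset.mem_insert]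
        tauto
      have eq2 : bnd (chk E ++ F) = insert (E.length - 1) (insert E.length S') := by
        apply Finset.ext; intro x
        rw [c2 x]
        try simp only [Finset.mem_insert]
        tauto
      have eq3 : bnd (E ++ comp F) = insert E.length S' := by
        apply Finset.ext; intro x
        rw [c3 x]
        try simp only [Finset.mem_insert]
        tauto
      have eq4 : bnd (chk E ++ comp F) = insert (E.length - 1) S' := by
        apply Finset.ext; intro x
        rw [c4 x]
        try simp only [Finset.mem_insert]
        tauto
      rw [eq1, eq2, eq3, eq4]
      linarith [hkey]
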